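/- Let n and k be natural numbers and φ : (Fin k → Bool) → (Fin k → Bool) → Prop a decidable predicate. Then the number of tuples of binary relations R : Fin k → Fin n → Fin n → Bool such that for all a b : Fin n, φ (fun i => R i a b) (fun i => R i b a) holds, equals A^{n(n−1)/2} · B^n, where A is the number of pairs (u, v) of functions Fin k → Bool with φ u v ∧ φ v u, and B is the number of functions u : Fin k → Bool with φ u u. -/

import Mathlib

private lemma card_lt_pairs (n : ℕ) :
    Fintype.card {p : Fin n × Fin n // p.1 < p.2} = n * (n - 1) / 2 := by
  have h1 : Fintype.card {p : Fin n × Fin n // p.1 < p.2}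
      = ∑ a : Fin n, Fintype.card {b : Fin n // a < b} := by
    rw [Fintype.card_congr (Equiv.subtypeProdEquivSigmaSubtype (fun a b : Fin n => a < b))]
    simp [Fintype.card_sigma]
  have h2 : ∀ a : Fin n, Fintype.card {b : Fin n // a < b} = n - 1 - a.val := by
    intro a
    rw [Fintype.card_congr (Equiv.subtypeEquivRight (fun b => Iff.rfl) :
        {b : Fin n // a < b} ≃ {b : Fin n // b ∈ Set.Ioi a})]
    exact (Fintype.card_Ioi a).trans (Fin.card_Ioi a)
  rw [h1]
  simp only [h2]
  rw [Fin.sum_univ_eq_sum_range (fun i => n - 1 - i) n]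
  have := Finset.sum_range_reflect (fun i => i) n
  calc ∑ i ∈ Finset.range n, (n - 1 - i) = ∑ i ∈ Finset.range n, i := by
        rw [← Finset.sum_range_reflect (fun i => i) n]
    _ = n * (n - 1) / 2 := Finset.sum_range_id n

private def fo2Equiv (n k : ℕ) (φ : (Fin k → Bool) → (Fin k → Bool) → Prop) :
    {R : Fin k → Fin n → Fin n → Bool //
        ∀ a b : Fin n, φ (fun i => R i a b) (fun i => R i b a)} ≃
      ({p : Fin n × Fin n // p.1 < p.2} →
          {uv : (Fin k → Bool) × (Fin k → Bool) // φ uv.1 uv.2 ∧ φ uv.2 uv.1}) ×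
        (Fin n → {u : Fin k → Bool // φ u u}) where
  toFun R :=
    (fun p => ⟨(fun i => R.1 i p.1.1 p.1.2, fun i => R.1 i p.1.2 p.1.1),
        R.2 p.1.1 p.1.2, R.2 p.1.2 p.1.1⟩,
     fun a => ⟨fun i => R.1 i a a, R.2 a a⟩)
  invFun gd :=
    ⟨fun i a b =>
      if hab : a < b then ((gd.1 ⟨(a, b), hab⟩).1.1) i
      else if hba : b < a then ((gd.1 ⟨(b, a), hba⟩).1.2) i
      else (gd.2 a).1 i, by
      intro a b
      rcases lt_trichotomy a b with h | h | h
      · simp only [dif_pos h, dif_neg (lt_asymm h)]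
        exact (gd.1 ⟨(a, b), h⟩).2.1
      · subst h
        simp only [dif_neg (lt_irrefl a)]
        exact (gd.2 a).2
      · simp only [dif_pos h, dif_neg (lt_asymm h)]
        exact (gd.1 ⟨(b, a), h⟩).2.2⟩
  left_inv R := by
    apply Subtype.ext
    funext i a b
    rcases lt_trichotomy a b with h | h | h
    · simp only [dif_pos h]
    · subst h; simp only [dif_neg (lt_irrefl a)]
    · simp only [dif_pos h, dif_neg (lt_asymm h)]
  right_inv gd := by
    apply Prod.ext
    · funext p
      apply Subtype.ext
      obtain ⟨⟨a, b⟩, hab⟩ := p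
      apply Prod.ext
      · funext i; simp only [dif_pos hab]
      · funext i; simp only [dif_pos hab, dif_neg (lt_asymm hab)]
    · funext a
      apply Subtype.ext
      funext i
      simp only [dif_neg (lt_irrefl a)]

/-- Core combinatorial identity behind PTIME data complexity of FO² (binary
relations only): the number of tuples of k binary relations on `Fin n`
satisfying a constraint `φ` on every ordered pair factorizes as
`A^{n(n−1)/2} · B^n`. -/
theorem fo2_binary_factorization (n k : ℕ)
    (φ : (Fin k → Bool) → (Fin k → Bool) → Prop)
    [∀ u v, Decidable (φ u v)] :
    Fintype.card
      {R : Fin k → Fin n → Fin n → Bool //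
        ∀ a b : Fin n, φ (fun i => R i a b) (fun i => R i b a)} =
      (Fintype.card
          {uv : (Fin k → Bool) × (Fin k → Bool) // φ uv.1 uv.2 ∧ φ uv.2 uv.1}) ^
        (n * (n - 1) / 2) *
      (Fintype.card {u : Fin k → Bool // φ u u}) ^ n := by
  classical
  rw [Fintype.card_congr (fo2Equiv n k φ), Fintype.card_prod,
    Fintype.card_fun, Fintype.card_fun, card_lt_pairs, Fintype.card_fin]
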